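/- Let V be a complex normed space, M ∈ ℕ, C ≥ 0, and g : ℂ → V a function with ‖g(zₙ)‖ ≤ C·|zₙ − 1|^{M+1} for all n ≥ 1. Then for every s ∈ ℂ with Re s > −M/2 and every a ∈ ℝ, the series Σ_{n=1}^∞ e^{2πina} · (2/(nλ(1−z)+2))^{2s} · g(zₙ) converges absolutely in V. (Convergence of the parabolic part of the fast transfer operator applied to functions vanishing to order M+1 at the parabolic fixed point, for Re s > −M/2.) -/

import Mathlib

/-!
STATEMENT 10: Absolute convergence of the (twisted) parabolic part of the fast
transfer operator applied to a function `g` vanishing to order `M+1` at the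
parabolic fixed point `1` along the orbit `zₙ = ((2−nλ)z+nλ)/(nλ(1−z)+2)`,
for `Re s > −M/2`.
-/

open Complex

theorem parabolic_part_summable_of_vanishing
    {V : Type} [NormedAddCommGroup V] [NormedSpace ℂ V]
    (lam : ℝ) (hlam : 0 < lam) (z : ℂ) (hz : z.re < 1)
    (M : ℕ) (C : ℝ) (hC : 0 ≤ C) (g : ℂ → V)
    (hg : ∀ n : ℕ, 1 ≤ n →
      ‖g (((2 - (n : ℂ) * (lam : ℂ)) * z + (n : ℂ) * (lam : ℂ)) /
            ((n : ℂ) * (lam : ℂ) * (1 - z) + 2))‖ ≤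
        C * ‖((2 - (n : ℂ) * (lam : ℂ)) * z + (n : ℂ) * (lam : ℂ)) /
              ((n : ℂ) * (lam : ℂ) * (1 - z) + 2) - 1‖ ^ (M + 1))
    (s : ℂ) (hs : -(M : ℝ) / 2 < s.re) (a : ℝ) :
    Summable (fun n : ℕ =>
      ‖(Complex.exp (2 * Real.pi * Complex.I * ((n : ℂ) + 1) * (a : ℂ)) *
            (2 / (((n : ℂ) + 1) * (lam : ℂ) * (1 - z) + 2)) ^ (2 * s)) •
          g (((2 - ((n : ℂ) + 1) * (lam : ℂ)) * z + ((n : ℂ) + 1) * (lam : ℂ)) /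
              (((n : ℂ) + 1) * (lam : ℂ) * (1 - z) + 2))‖) := by
  set c : ℝ := lam * (1 - z.re) with hcdef
  have hc : 0 < c := mul_pos hlam (by linarith)
  set p : ℝ := 2 * s.re + (M + 1) with hpdef
  have hp : 1 < p := by
    have : -(M : ℝ) < 2 * s.re := by linarith
    simp only [hpdef]; linarith
  have hp0 : 0 ≤ p := by linarith
  set E : ℝ := Real.exp (Real.pi * (2 * |s.im|)) with hEdef
  have hE : 0 ≤ E := (Real.exp_pos _).le
  set d : ℕ → ℂ := fun n => ((n : ℂ) + 1) * (lam : ℂ) * (1 - z) + 2 with hddef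
  have hdre : ∀ n : ℕ, ((n : ℝ) + 1) * c + 2 ≤ (d n).re := by
    intro n
    have : (d n).re = ((n : ℝ) + 1) * c + 2 := by
      simp [hddef, hcdef, Complex.add_re, Complex.mul_re, Complex.mul_im,
        Complex.sub_re, Complex.sub_im, Complex.ofReal_re, Complex.ofReal_im]
      ring
    linarith [this.ge]
  have hdabs : ∀ n : ℕ, ((n : ℝ) + 1) * c ≤ ‖d n‖ := by
    intro n
    have h1 := hdre n
    have h2 := Complex.re_le_norm (d n)
    linarith
  have hd0 : ∀ n : ℕ, d n ≠ 0 := by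
    intro n h
    have h1 := hdre n
    rw [h] at h1
    simp only [Complex.zero_re] at h1
    have : 0 ≤ ((n:ℝ)+1) * c := by positivity
    linarith
  have hnpos : ∀ n : ℕ, (0:ℝ) < (n:ℝ) + 1 := fun n => by positivity
  -- the comparison function
  set B : ℝ := E * C * ‖z - 1‖ ^ (M + 1) * (2 / c) ^ p with hBdef
  have hsum : Summable (fun n : ℕ => B * ((n : ℝ) + 1) ^ (-p)) := by
    apply Summable.mul_left
    have h0 : Summable (fun n : ℕ => (n : ℝ) ^ (-p)) :=
      Real.summable_nat_rpow.mpr (by linarith)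
    have h1 := (summable_nat_add_iff 1).mpr h0
    convert h1 using 2 with n
    swap
    push_cast
    ring_nf
    rfl
  apply Summable.of_nonneg_of_le (fun n => norm_nonneg _) _ hsum
  intro n
  set w : ℂ := ((2 - ((n : ℂ) + 1) * (lam : ℂ)) * z + ((n : ℂ) + 1) * (lam : ℂ)) / (d n)
    with hwdef
  have hw1 : w - 1 = (2 / d n) * (z - 1) := by
    rw [hwdef, div_sub_one (hd0 n)]
    have hnum : (2 - ((n : ℂ) + 1) * (lam : ℂ)) * z + ((n : ℂ) + 1) * (lam : ℂ) - d n
        = 2 * (z - 1) := by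
      rw [hddef]; ring
    rw [hnum, mul_div_right_comm]
  -- bound on `g`
  have hgn : ‖g w‖ ≤ C * (‖2 / d n‖ * ‖z - 1‖) ^ (M + 1) := by
    have := hg (n + 1) (Nat.le_add_left 1 n)
    push_cast at this
    calc ‖g w‖ ≤ C * ‖w - 1‖ ^ (M + 1) := this
      _ = C * (‖2 / d n‖ * ‖z - 1‖) ^ (M + 1) := by
          rw [hw1, norm_mul]
  -- bound on the exponential
  have hexp : ‖Complex.exp (2 * Real.pi * Complex.I * ((n : ℂ) + 1) * (a : ℂ))‖ = 1 := by
    rw [Complex.norm_exp]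
    have : (2 * (Real.pi : ℂ) * Complex.I * ((n : ℂ) + 1) * (a : ℂ)).re = 0 := by
      simp [Complex.mul_re, Complex.mul_im]
    rw [this, Real.exp_zero]
  -- bound on the cpow
  set r : ℝ := ‖2 / d n‖ with hrdef
  have hr0 : 0 < r := by
    rw [hrdef]
    apply norm_pos_iff.mpr
    exact div_ne_zero two_ne_zero (hd0 n)
  have hcpow : ‖(2 / d n) ^ (2 * s)‖ ≤ r ^ (2 * s.re) * E := by
    calc ‖(2 / d n) ^ (2 * s)‖
        ≤ ‖2 / d n‖ ^ (2 * s).re / Real.exp (Complex.arg (2 / d n) * (2 * s).im) :=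
          Complex.norm_cpow_le _ _
      _ ≤ r ^ (2 * s.re) * E := by
          rw [div_eq_mul_inv, ← Real.exp_neg]
          have h1 : (2 * s).re = 2 * s.re := by simp
          rw [h1]
          apply mul_le_mul_of_nonneg_left _ (Real.rpow_nonneg hr0.le _)
          rw [hEdef]
          apply Real.exp_le_exp.mpr
          have harg := Complex.abs_arg_le_pi (2 / d n)
          have him : |(2 * s).im| = 2 * |s.im| := by
            simp [Complex.mul_im, abs_mul]
          calc -(Complex.arg (2 / d n) * (2 * s).im)
              ≤ |Complex.arg (2 / d n) * (2 * s).im| := neg_le_abs _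
            _ = |Complex.arg (2 / d n)| * |(2 * s).im| := abs_mul _ _
            _ ≤ Real.pi * (2 * |s.im|) := by
                rw [him]
                apply mul_le_mul_of_nonneg_right harg (by positivity)
  -- combine
  have hrle : r ≤ (2 / c) * ((n : ℝ) + 1)⁻¹ := by
    have key : 2 / ‖d n‖ ≤ 2 / (((n:ℝ)+1) * c) :=
      div_le_div_of_nonneg_left (by norm_num) (by positivity) (hdabs n)
    calc r = 2 / ‖d n‖ := by
            rw [hrdef, norm_div, Complex.norm_two]
      _ ≤ 2 / (((n:ℝ)+1) * c) := key
      _ = (2 / c) * ((n : ℝ) + 1)⁻¹ := by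
            field_simp
  calc ‖(Complex.exp (2 * Real.pi * Complex.I * ((n : ℂ) + 1) * (a : ℂ)) *
            (2 / (((n : ℂ) + 1) * (lam : ℂ) * (1 - z) + 2)) ^ (2 * s)) •
          g (((2 - ((n : ℂ) + 1) * (lam : ℂ)) * z + ((n : ℂ) + 1) * (lam : ℂ)) /
              (((n : ℂ) + 1) * (lam : ℂ) * (1 - z) + 2))‖
      = ‖Complex.exp (2 * Real.pi * Complex.I * ((n : ℂ) + 1) * (a : ℂ))‖ *
          ‖(2 / d n) ^ (2 * s)‖ * ‖g w‖ := by
        rw [norm_smul, norm_mul]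
    _ ≤ 1 * (r ^ (2 * s.re) * E) * (C * (r * ‖z - 1‖) ^ (M + 1)) := by
        apply mul_le_mul _ hgn (norm_nonneg _) (by positivity)
        rw [hexp]
        exact mul_le_mul_of_nonneg_left hcpow (by norm_num)
    _ = E * C * ‖z - 1‖ ^ (M + 1) * (r ^ (2 * s.re) * r ^ (M + 1)) := by
        rw [mul_pow]; ring
    _ = E * C * ‖z - 1‖ ^ (M + 1) * r ^ p := by
        congr 1
        rw [← Real.rpow_natCast r (M + 1), ← Real.rpow_add hr0, hpdef]
        push_cast; ring_nf
    _ ≤ E * C * ‖z - 1‖ ^ (M + 1) * ((2 / c) * ((n : ℝ) + 1)⁻¹) ^ p := by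
        apply mul_le_mul_of_nonneg_left _ (by positivity)
        exact Real.rpow_le_rpow hr0.le hrle hp0
    _ = B * ((n : ℝ) + 1) ^ (-p) := by
        rw [Real.mul_rpow (by positivity) (by positivity),
          Real.inv_rpow (hnpos n).le, ← Real.rpow_neg (hnpos n).le, hBdef]
        ring
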